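/- Let B ⊆ ℕ^[n] be a shifted order ideal of monomials. For i ∈ [0,n] define A_i = { m ∈ ℕ^[i+1,n] : m·ℕ^{i} ⊆ B, m·ℕ^{i+1} ⊄ B } and C_i = (B ∖ ⋃_{j ≤ i} A_j) ∩ ℕ^[i+1,n]. Then C_i = { m ∈ B ∩ ℕ^[i+1,n] : m·ℕ^{i+1} ⊆ B }, and C_{i-1} is the disjoint union C_{i-1} = A_i ⊔ C_i ⊔ y_i·C_{i-1}. -/
import Mathlib


/-- A monomial in variables `y_i` (`i : ℕ`), identified with its exponent vector. -/
abbrev Mono : Type := ℕ →₀ ℕ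

/-- Total degree of a monomial. -/
def mdeg (m : Mono) : ℕ := m.sum fun _ e => e

/-- The set of monomials `m·ℕ^σ`, i.e. products of `m` with monomials supported on `σ`. -/
def pairSet (m : Mono) (σ : Finset ℕ) : Set Mono :=
  { x | ∃ t : Mono, t.support ⊆ σ ∧ x = m + t }

/-- `m·ℕ^σ` is an admissible pair of (the complement of) `B`:
`supp m ∩ σ = ∅` and `m·ℕ^σ ⊆ B`. -/
def Admissible (B : Set Mono) (m : Mono) (σ : Finset ℕ) : Prop :=
  Disjoint m.support σ ∧ pairSet m σ ⊆ B

/-- A standard pair: an inclusion-maximal admissible pair. -/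
def IsStandardPair (B : Set Mono) (m : Mono) (σ : Finset ℕ) : Prop :=
  Admissible B m σ ∧
    ∀ (m' : Mono) (σ' : Finset ℕ), Admissible B m' σ' →
      pairSet m σ ⊆ pairSet m' σ' → pairSet m σ = pairSet m' σ'

/-- `B` is shifted: if `1 ≤ j < i` and `y_i·m ∈ B` then `y_j·m ∈ B`. -/
def ShiftedSet (B : Set Mono) : Prop :=
  ∀ (m : Mono) (i j : ℕ), 1 ≤ j → j < i →
    m + Finsupp.single i 1 ∈ B → m + Finsupp.single j 1 ∈ B

/-- `B` is an order ideal of monomials: closed under divisibility. -/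
def IsOrderIdeal (B : Set Mono) : Prop := ∀ m ∈ B, ∀ m' : Mono, m' ≤ m → m' ∈ B

/-- All monomials of `B` involve only the variables `y_1, ..., y_n`. -/
def SupportedIn (B : Set Mono) (n : ℕ) : Prop := ∀ m ∈ B, m.support ⊆ Finset.Icc 1 n

/-- `m·ℕ^{i} ⊆ B`: all products of `m` with powers of `y_i` lie in `B`
(for `i = 0` this just means `m ∈ B`, the convention `ℕ^{∅} = {1}`). -/
def VarTower (B : Set Mono) (m : Mono) (i : ℕ) : Prop :=
  if i = 0 then m ∈ B else ∀ t : ℕ, m + Finsupp.single i t ∈ B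

/-- `A_i(B) = { m ∈ ℕ^[i+1,n] : m·ℕ^{i} ⊆ B, m·ℕ^{i+1} ⊄ B }`. -/
def Aset (B : Set Mono) (n i : ℕ) : Set Mono :=
  { m | m.support ⊆ Finset.Icc (i + 1) n ∧ VarTower B m i ∧ ¬ VarTower B m (i + 1) }

/-- Property (B4): if `m ∈ B ∩ ℕ^[k,n]` has degree `≥ k` then `m·ℕ^{k} ⊆ B`. -/
def HasB4 (B : Set Mono) (n : ℕ) : Prop :=
  ∀ (k : ℕ) (m : Mono), 1 ≤ k → m ∈ B → m.support ⊆ Finset.Icc k n → k ≤ mdeg m →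
    ∀ t : ℕ, m + Finsupp.single k t ∈ B

/-- `C_i = (B ∖ ⋃_{j ≤ i} A_j) ∩ ℕ^[i+1,n]`. -/
def Cset (B : Set Mono) (n i : ℕ) : Set Mono :=
  { m | m ∈ B ∧ m.support ⊆ Finset.Icc (i + 1) n ∧ ∀ j ≤ i, m ∉ Aset B n j }

/-- For a shifted order ideal `B ⊆ ℕ^[n]`:
`C_i = { m ∈ B ∩ ℕ^[i+1,n] : m·ℕ^{i+1} ⊆ B }`, and `C_{i-1}` is the disjoint
union `A_i ⊔ C_i ⊔ y_i·C_{i-1}`. -/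
lemma varTower_pos {B : Set Mono} {m : Mono} {i : ℕ} (hi : i ≠ 0) :
    VarTower B m i ↔ ∀ t : ℕ, m + Finsupp.single i t ∈ B := by
  rw [VarTower, if_neg hi]

lemma varTower_mem {B : Set Mono} {m : Mono} {i : ℕ} (hi : 1 ≤ i)
    (h : VarTower B m i) : m ∈ B := by
  rw [varTower_pos (by omega)] at h
  simpa using h 0

lemma varTower_down {B : Set Mono} (h1 : ShiftedSet B) {m : Mono} {i j : ℕ}
    (hj : 1 ≤ j) (hji : j ≤ i) (h : VarTower B m i) : VarTower B m j := by
  rcases eq_or_lt_of_le hji with rfl | hlt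
  · exact h
  rw [varTower_pos (by omega)] at h
  rw [varTower_pos (by omega)]
  have key : ∀ t s : ℕ, m + Finsupp.single j t + Finsupp.single i s ∈ B := by
    intro t
    induction t with
    | zero => intro s; simpa using h s
    | succ t ih =>
      intro s
      have h2 : (m + Finsupp.single j t + Finsupp.single i s) + Finsupp.single i 1 ∈ B := by
        have h4 := ih (s + 1)
        rw [Finsupp.single_add] at h4
        convert h4 using 1
        abel
      have h3 := h1 _ i j hj hlt h2
      rw [show Finsupp.single j (t + 1) = Finsupp.single j t + Finsupp.single j 1 from
        Finsupp.single_add j t 1]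
      convert h3 using 1
      abel
  intro t
  simpa using key t 0

lemma Cset_char (n : ℕ) (B : Set Mono) (h1 : ShiftedSet B) (j : ℕ) :
    Cset B n j = { m | m ∈ B ∧ m.support ⊆ Finset.Icc (j + 1) n ∧ VarTower B m (j + 1) } := by
  ext m
  simp only [Cset, Set.mem_setOf_eq]
  constructor
  · rintro ⟨hB, hsupp, hA⟩
    refine ⟨hB, hsupp, ?_⟩
    have key : ∀ k, k ≤ j + 1 → VarTower B m k := by
      intro k
      induction k with
      | zero => intro _; rw [VarTower, if_pos rfl]; exact hB
      | succ k ih =>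
        intro hk
        have h := hA k (by omega)
        rw [Aset, Set.mem_setOf_eq] at h
        push_neg at h
        exact h (hsupp.trans (Finset.Icc_subset_Icc (by omega) le_rfl)) (ih (by omega))
    exact key (j + 1) le_rfl
  · rintro ⟨hB, hsupp, hT⟩
    refine ⟨hB, hsupp, ?_⟩
    intro k hk hAk
    rw [Aset, Set.mem_setOf_eq] at hAk
    exact hAk.2.2 (varTower_down h1 (by omega) (by omega) hT)

theorem Cset_char_and_decomposition
    (n : ℕ) (B : Set Mono) (h1 : ShiftedSet B) (h2 : IsOrderIdeal B)
    (h3 : SupportedIn B n) (i : ℕ) (hi : 1 ≤ i) :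
    (∀ j : ℕ, Cset B n j =
        { m | m ∈ B ∧ m.support ⊆ Finset.Icc (j + 1) n ∧ VarTower B m (j + 1) }) ∧
    Cset B n (i - 1) =
      Aset B n i ∪ Cset B n i ∪ (fun m => Finsupp.single i 1 + m) '' Cset B n (i - 1) ∧
    Disjoint (Aset B n i) (Cset B n i) ∧
    Disjoint (Aset B n i) ((fun m => Finsupp.single i 1 + m) '' Cset B n (i - 1)) ∧
    Disjoint (Cset B n i) ((fun m => Finsupp.single i 1 + m) '' Cset B n (i - 1)) := by
  have hc := Cset_char n B h1
  have hii : i - 1 + 1 = i := by omega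
  -- membership in image has positive value at i
  have himg : ∀ m' : Mono, (Finsupp.single i 1 + m' : Mono) i ≠ 0 := by
    intro m'
    simp [Finsupp.add_apply, Finsupp.single_eq_same]
  -- members of A_i and C_i vanish at i
  have hAvan : ∀ m ∈ Aset B n i, m i = 0 := by
    intro m hm
    by_contra h
    have := hm.1 (Finsupp.mem_support_iff.mpr h)
    simp [Finset.mem_Icc] at this
  have hCvan : ∀ m ∈ Cset B n i, m i = 0 := by
    intro m hm
    rw [hc i] at hm
    by_contra h
    have := hm.2.1 (Finsupp.mem_support_iff.mpr h)
    simp [Finset.mem_Icc] at this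
  refine ⟨hc, ?_, ?_, ?_, ?_⟩
  · ext m
    rw [hc (i - 1), hc i, hii]
    constructor
    · rintro ⟨hB, hsupp, hT⟩
      by_cases hmi : m i = 0
      · have hsupp' : m.support ⊆ Finset.Icc (i + 1) n := by
          intro a ha
          have h4 := hsupp ha
          have h5 : m a ≠ 0 := Finsupp.mem_support_iff.mp ha
          rw [Finset.mem_Icc] at h4 ⊢
          rcases eq_or_ne a i with rfl | hne
          · exact absurd hmi h5
          · omega
        by_cases hT1 : VarTower B m (i + 1)
        · exact Or.inl (Or.inr ⟨hB, hsupp', hT1⟩)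
        · exact Or.inl (Or.inl ⟨hsupp', varTower_down h1 hi le_rfl hT, hT1⟩)
      · right
        refine ⟨m - Finsupp.single i 1, ?_, ?_⟩
        · have hle : m - Finsupp.single i 1 ≤ m := tsub_le_self
          refine ⟨h2 m hB _ hle, ?_, ?_⟩
          · intro a ha
            apply hsupp
            rw [Finsupp.mem_support_iff] at ha ⊢
            rw [Finsupp.tsub_apply] at ha
            omega
          · rw [varTower_pos (by omega)]
            intro t
            rcases t with _ | s
            · simpa using h2 m hB _ hle
            · have : m - Finsupp.single i 1 + Finsupp.single i (s + 1)
                  = m + Finsupp.single i s := by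
                ext a
                rcases eq_or_ne a i with rfl | hne
                · simp [Finsupp.add_apply, Finsupp.tsub_apply, Finsupp.single_eq_same]
                  omega
                · simp [Finsupp.add_apply, Finsupp.tsub_apply,
                    Finsupp.single_apply, hne.symm]
              rw [this]
              exact (varTower_pos (by omega)).mp hT s
        · ext a
          rcases eq_or_ne a i with rfl | hne
          · simp [Finsupp.add_apply, Finsupp.tsub_apply, Finsupp.single_eq_same]
            omega
          · simp [Finsupp.add_apply, Finsupp.tsub_apply, Finsupp.single_apply,
              hne.symm]
    · rintro ((hm | hm) | ⟨m', hm', rfl⟩)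
      · exact ⟨varTower_mem hi hm.2.1, hm.1.trans
          (Finset.Icc_subset_Icc (by omega) le_rfl), hm.2.1⟩
      · exact ⟨hm.1, hm.2.1.trans (Finset.Icc_subset_Icc (by omega) le_rfl),
          varTower_down h1 hi (by omega) hm.2.2⟩
      · have hT : VarTower B (Finsupp.single i 1 + m') i := by
          rw [varTower_pos (by omega)]
          intro t
          have : Finsupp.single i 1 + m' + Finsupp.single i t
              = m' + Finsupp.single i (t + 1) := by
            rw [Finsupp.single_add]
            abel
          rw [this]
          exact (varTower_pos (by omega)).mp hm'.2.2 (t + 1)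
        refine ⟨varTower_mem hi hT, ?_, hT⟩
        intro a ha
        rcases Finset.mem_union.mp (Finsupp.support_add ha) with h4 | h4
        · have := Finsupp.mem_support_iff.mp h4
          rw [Finsupp.single_apply] at this
          rcases eq_or_ne i a with rfl | hne
          · rw [Finset.mem_Icc]
            exact ⟨le_rfl, by
              have := h3 _ (varTower_mem hi hT)
              have h6 := this (Finsupp.mem_support_iff.mpr (himg m'))
              rw [Finset.mem_Icc] at h6
              exact h6.2⟩
          · simp [hne] at this
        · exact hm'.2.1 h4
  · rw [Set.disjoint_left]
    intro m hA hC
    rw [hc i] at hC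
    exact hA.2.2 hC.2.2
  · rw [Set.disjoint_left]
    rintro m hA ⟨m', _, rfl⟩
    exact himg m' (hAvan _ hA)
  · rw [Set.disjoint_left]
    rintro m hC ⟨m', _, rfl⟩
    exact himg m' (hCvan _ hC)
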